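/- arXiv:1611.07618 — 3 statements merged into one kernel-verified Lean document; each statement's English description precedes it below -/
import Mathlib

section
/- Let T > 0, λ > 0, u₀ ≥ 0, and let L : [0,T] × [0,∞) → [0,∞) be a bounded function such that t ↦ L(t,u) is measurable (locally integrable) on [0,T] for each fixed u ∈ [0,∞) and u ↦ L(t,u) is continuous and non-decreasing on [0,∞) for each fixed t ∈ [0,T]. Then the integral equation u(t) = u₀ + λ ∫₀ᵗ L(s, u(s)) ds has a (continuous) global solution u : [0,T] → [0,∞). -/
open MeasureTheory Set Filter Topology Interval

/-- Auxiliary global-existence lemma for a "globalized" right-hand side `G`: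
bounded, nonnegative, measurable in `t` for each `v`, continuous and monotone in `v`
for each `t`, all globally on `ℝ`. -/
theorem volterra_aux (T lam u₀ M : ℝ) (hT : 0 < T) (hlam : 0 < lam) (hu₀ : 0 ≤ u₀)
    (G : ℝ → ℝ → ℝ)
    (hnn : ∀ t v, 0 ≤ G t v) (hbd : ∀ t v, G t v ≤ M)
    (hmeas : ∀ v, Measurable fun t => G t v)
    (hcont : ∀ t, Continuous fun v => G t v)
    (hmono : ∀ t, Monotone fun v => G t v) :
    ∃ u : ℝ → ℝ, ContinuousOn u (Icc 0 T) ∧ (∀ t ∈ Icc (0:ℝ) T, u₀ ≤ u t) ∧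
      ∀ t ∈ Icc (0:ℝ) T, u t = u₀ + lam * ∫ s in (0:ℝ)..t, G s (u s) := by
  have hM : 0 ≤ M := le_trans (hnn 0 0) (hbd 0 0)
  -- joint measurability
  have hjoint : Measurable (Function.uncurry fun v t => G t v) :=
    measurable_uncurry_of_continuous_of_measurable (fun t => hcont t) hmeas
  have hcomp : ∀ f : ℝ → ℝ, Measurable f → Measurable fun s => G s (f s) := by
    intro f hf
    exact hjoint.comp (hf.prodMk measurable_id)
  have hII : ∀ f : ℝ → ℝ, Measurable f → ∀ a b : ℝ,
      IntervalIntegrable (fun s => G s (f s)) volume a b := by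
    intro f hf a b
    rw [intervalIntegrable_iff]
    refine Integrable.mono' ((integrableOn_const_iff (C := M)).2 (Or.inr measure_Ioc_lt_top))
      ((hcomp f hf).aestronglyMeasurable) ?_
    filter_upwards with s
    rw [Real.norm_eq_abs, abs_of_nonneg (hnn s (f s))]
    exact hbd s (f s)
  -- Picard iterates
  set F : ℕ → ℝ → ℝ := fun n =>
    Nat.rec (motive := fun _ => ℝ → ℝ) (fun _ => u₀)
      (fun _ v t => u₀ + lam * ∫ s in (0:ℝ)..t, G s (v s)) n with hF
  have hF0 : F 0 = fun _ => u₀ := rfl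
  have hFsucc : ∀ n, F (n + 1) = fun t => u₀ + lam * ∫ s in (0:ℝ)..t, G s (F n s) :=
    fun n => rfl
  have hFcont : ∀ n, Continuous (F n) := by
    intro n
    induction n with
    | zero => exact continuous_const
    | succ n ih =>
      rw [hFsucc]
      exact continuous_const.add (continuous_const.mul
        (intervalIntegral.continuous_primitive (hII _ ih.measurable) 0))
  have hFnn : ∀ n t, 0 ≤ t → u₀ ≤ F n t := by
    intro n t ht
    cases n with
    | zero => exact le_refl _
    | succ n =>
      show u₀ ≤ u₀ + lam * ∫ s in (0:ℝ)..t, G s (F n s)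
      have : 0 ≤ ∫ s in (0:ℝ)..t, G s (F n s) :=
        intervalIntegral.integral_nonneg ht (fun s _ => hnn s (F n s))
      nlinarith
  have hFstep : ∀ n t, 0 ≤ t → F n t ≤ F (n + 1) t := by
    intro n
    induction n with
    | zero =>
      intro t ht
      show F 0 t ≤ u₀ + lam * ∫ s in (0:ℝ)..t, G s (F 0 s)
      have : 0 ≤ ∫ s in (0:ℝ)..t, G s (F 0 s) :=
        intervalIntegral.integral_nonneg ht (fun s _ => hnn s (F 0 s))
      have : F 0 t = u₀ := rfl
      nlinarith
    | succ n ih =>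
      intro t ht
      show u₀ + lam * (∫ s in (0:ℝ)..t, G s (F n s)) ≤
        u₀ + lam * ∫ s in (0:ℝ)..t, G s (F (n+1) s)
      have hint : (∫ s in (0:ℝ)..t, G s (F n s)) ≤ ∫ s in (0:ℝ)..t, G s (F (n+1) s) := by
        refine intervalIntegral.integral_mono_on ht (hII _ (hFcont n).measurable 0 t)
          (hII _ (hFcont (n+1)).measurable 0 t) ?_
        intro s hs
        exact hmono s (ih s hs.1)
      nlinarith
  have hFmono : ∀ t, 0 ≤ t → Monotone fun n => F n t := by
    intro t ht
    exact monotone_nat_of_le_succ fun n => hFstep n t ht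
  have hFle : ∀ n t, t ∈ Icc (0:ℝ) T → F n t ≤ u₀ + lam * (M * T) := by
    intro n t ht
    cases n with
    | zero =>
      have : F 0 t = u₀ := rfl
      nlinarith [mul_nonneg hlam.le (mul_nonneg hM hT.le)]
    | succ n =>
      show u₀ + lam * (∫ s in (0:ℝ)..t, G s (F n s)) ≤ u₀ + lam * (M * T)
      have h1 : (∫ s in (0:ℝ)..t, G s (F n s)) ≤ ∫ s in (0:ℝ)..t, M := by
        refine intervalIntegral.integral_mono_on ht.1 (hII _ (hFcont n).measurable 0 t)
          (intervalIntegrable_const) ?_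
        intro s _
        exact hbd s (F n s)
      have h2 : (∫ s in (0:ℝ)..t, (M:ℝ)) = M * t := by
        simp [mul_comm]
      have h3 : M * t ≤ M * T := by nlinarith [ht.2]
      nlinarith
  have hbdd : ∀ t ∈ Icc (0:ℝ) T, BddAbove (range fun n => F n t) := by
    intro t ht
    exact ⟨u₀ + lam * (M * T), by rintro x ⟨n, rfl⟩; exact hFle n t ht⟩
  set u : ℝ → ℝ := fun t => ⨆ n, F n t with hu
  have htend : ∀ t ∈ Icc (0:ℝ) T, Tendsto (fun n => F n t) atTop (𝓝 (u t)) := by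
    intro t ht
    exact tendsto_atTop_ciSup (hFmono t ht.1) (hbdd t ht)
  -- Lipschitz estimate
  have hFlip : ∀ n a b, |F n a - F n b| ≤ lam * M * |a - b| := by
    intro n a b
    cases n with
    | zero =>
      show |u₀ - u₀| ≤ lam * M * |a - b|
      rw [sub_self, abs_zero]
      positivity
    | succ n =>
      show |(u₀ + lam * ∫ s in (0:ℝ)..a, G s (F n s)) -
          (u₀ + lam * ∫ s in (0:ℝ)..b, G s (F n s))| ≤ lam * M * |a - b|
      have e := intervalIntegral.integral_interval_sub_left
        (hII _ (hFcont n).measurable 0 a) (hII _ (hFcont n).measurable 0 b)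
      have key : ((u₀ + lam * ∫ s in (0:ℝ)..a, G s (F n s)) -
          (u₀ + lam * ∫ s in (0:ℝ)..b, G s (F n s))) =
          lam * ∫ s in b..a, G s (F n s) := by
        rw [← e]; ring
      rw [key, abs_mul, abs_of_pos hlam, mul_assoc]
      have : ‖∫ s in b..a, G s (F n s)‖ ≤ M * |a - b| :=
        intervalIntegral.norm_integral_le_of_norm_le_const (by
          intro x _
          rw [Real.norm_eq_abs, abs_of_nonneg (hnn x (F n x))]
          exact hbd x (F n x))
      rw [Real.norm_eq_abs] at this
      exact mul_le_mul_of_nonneg_left this hlam.le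
  have hulip : ∀ a ∈ Icc (0:ℝ) T, ∀ b ∈ Icc (0:ℝ) T, |u a - u b| ≤ lam * M * |a - b| := by
    intro a ha b hb
    have h1 : Tendsto (fun n => |F n a - F n b|) atTop (𝓝 |u a - u b|) :=
      ((htend a ha).sub (htend b hb)).abs
    exact le_of_tendsto h1 (Eventually.of_forall fun n => hFlip n a b)
  have hucont : ContinuousOn u (Icc 0 T) := by
    refine LipschitzOnWith.continuousOn (K := Real.toNNReal (lam * M))
      (LipschitzOnWith.of_dist_le_mul ?_)
    intro a ha b hb
    rw [Real.dist_eq, Real.dist_eq, Real.coe_toNNReal _ (by positivity)]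
    exact hulip a ha b hb
  have hunn : ∀ t ∈ Icc (0:ℝ) T, u₀ ≤ u t := by
    intro t ht
    exact le_ciSup_of_le (hbdd t ht) 0 (le_refl _)
  refine ⟨u, hucont, hunn, ?_⟩
  intro t ht
  -- measurability of the limit integrand
  have huIoc : Ι (0:ℝ) t ⊆ Icc 0 T := by
    rw [uIoc_of_le ht.1]
    exact (Ioc_subset_Icc_self).trans (Icc_subset_Icc le_rfl ht.2)
  have haemem : ∀ᵐ x ∂(volume.restrict (Ι (0:ℝ) t)), x ∈ Ι (0:ℝ) t :=
    ae_restrict_mem measurableSet_uIoc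
  have huaem : AEStronglyMeasurable u (volume.restrict (Ι (0:ℝ) t)) := by
    refine aestronglyMeasurable_of_tendsto_ae atTop
      (fun n => (hFcont n).aestronglyMeasurable) ?_
    filter_upwards [haemem] with x hx
    exact htend x (huIoc hx)
  have hGu_aem : AEStronglyMeasurable (fun s => G s (u s)) (volume.restrict (Ι (0:ℝ) t)) := by
    have : AEMeasurable (fun s => G s (u s)) (volume.restrict (Ι (0:ℝ) t)) :=
      hjoint.comp_aemeasurable (huaem.aemeasurable.prodMk aemeasurable_id)
    exact this.aestronglyMeasurable
  have hGu_int : IntervalIntegrable (fun s => G s (u s)) volume 0 t := by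
    rw [intervalIntegrable_iff]
    refine Integrable.mono' ((integrableOn_const_iff (C := M)).2 (Or.inr measure_Ioc_lt_top)) hGu_aem ?_
    filter_upwards with s
    rw [Real.norm_eq_abs, abs_of_nonneg (hnn s (u s))]
    exact hbd s (u s)
  have hint_tend : Tendsto (fun n => ∫ s in (0:ℝ)..t, G s (F n s)) atTop
      (𝓝 (∫ s in (0:ℝ)..t, G s (u s))) := by
    refine intervalIntegral.tendsto_integral_filter_of_dominated_convergence
      (fun _ => M)
      (Eventually.of_forall fun n => (hcomp _ (hFcont n).measurable).aestronglyMeasurable)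
      (Eventually.of_forall fun n => ?_) intervalIntegrable_const ?_
    · filter_upwards with x _
      rw [Real.norm_eq_abs, abs_of_nonneg (hnn x (F n x))]
      exact hbd x (F n x)
    · filter_upwards with x hx
      exact ((hcont x).tendsto (u x)).comp (htend x (huIoc hx))
  have h1 : Tendsto (fun n => F (n + 1) t) atTop
      (𝓝 (u₀ + lam * ∫ s in (0:ℝ)..t, G s (u s))) := by
    simp only [hFsucc]
    exact tendsto_const_nhds.add (tendsto_const_nhds.mul hint_tend)
  have h2 : Tendsto (fun n => F (n + 1) t) atTop (𝓝 (u t)) :=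
    (htend t ht).comp (tendsto_add_atTop_nat 1)
  exact tendsto_nhds_unique h2 h1

/-- Lemma 3.1: global existence for the scalar Volterra integral equation
`u t = u₀ + λ ∫₀ᵗ L(s, u s) ds` on `[0, T]`. -/
theorem stmt0 (T lam u₀ : ℝ) (hT : 0 < T) (hlam : 0 < lam) (hu₀ : 0 ≤ u₀)
    (L : ℝ → ℝ → ℝ)
    (hL_nonneg : ∀ t ∈ Icc (0:ℝ) T, ∀ u ∈ Ici (0:ℝ), 0 ≤ L t u)
    (hL_bdd : ∃ M : ℝ, ∀ t ∈ Icc (0:ℝ) T, ∀ u ∈ Ici (0:ℝ), L t u ≤ M)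
    (hL_meas : ∀ u ∈ Ici (0:ℝ), Measurable fun t => L t u)
    (hL_cont : ∀ t ∈ Icc (0:ℝ) T, ContinuousOn (fun u => L t u) (Ici 0))
    (hL_mono : ∀ t ∈ Icc (0:ℝ) T, MonotoneOn (fun u => L t u) (Ici 0)) :
    ∃ u : ℝ → ℝ, ContinuousOn u (Icc 0 T) ∧ (∀ t ∈ Icc (0:ℝ) T, 0 ≤ u t) ∧
      ∀ t ∈ Icc (0:ℝ) T, u t = u₀ + lam * ∫ s in (0:ℝ)..t, L s (u s) := by
  obtain ⟨M, hM⟩ := hL_bdd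
  set c : ℝ → ℝ := fun t => min (max t 0) T with hc
  have hcmem : ∀ t, c t ∈ Icc (0:ℝ) T :=
    fun t => ⟨le_min (le_max_right t 0) hT.le, min_le_right _ _⟩
  have hcmeas : Measurable c := (measurable_id.max measurable_const).min measurable_const
  have hceq : ∀ t ∈ Icc (0:ℝ) T, c t = t := by
    intro t ht
    rw [hc]
    simp only [max_eq_left ht.1, min_eq_left ht.2]
  set G : ℝ → ℝ → ℝ := fun t v => L (c t) (max v 0) with hG
  have hvmem : ∀ v : ℝ, max v 0 ∈ Ici (0:ℝ) := fun v => le_max_right v 0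
  obtain ⟨u, hcontu, hnnu, hequ⟩ :=
    volterra_aux T lam u₀ M hT hlam hu₀ G
      (fun t v => hL_nonneg (c t) (hcmem t) _ (hvmem v))
      (fun t v => hM (c t) (hcmem t) _ (hvmem v))
      (fun v => (hL_meas _ (hvmem v)).comp hcmeas)
      (fun t => (hL_cont (c t) (hcmem t)).comp_continuous
        (continuous_id.max continuous_const) hvmem)
      (fun t a b hab =>
        hL_mono (c t) (hcmem t) (hvmem a) (hvmem b) (max_le_max hab le_rfl))
  refine ⟨u, hcontu, fun t ht => hu₀.trans (hnnu t ht), ?_⟩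
  intro t ht
  rw [hequ t ht]
  congr 1
  congr 1
  refine intervalIntegral.integral_congr ?_
  intro s hs
  rw [uIcc_of_le ht.1] at hs
  have hsT : s ∈ Icc (0:ℝ) T := ⟨hs.1, hs.2.trans ht.2⟩
  have h1 : c s = s := hceq s hsT
  have h2 : max (u s) 0 = u s := max_eq_left (hu₀.trans (hnnu s hsT))
  simp only [hG, h1, h2]
end

section
/- Let H be a real Hilbert space, T > 0, α ∈ (1/2, 1), y₀ ∈ H, and let f : [0,T] × H → H be measurable and continuous in the second variable. Suppose there is a bounded function L : [0,T] × [0,∞) → [0,∞), measurable in t for each fixed u, continuous and non-decreasing in u for each fixed t, such that ‖f(t,x)‖² ≤ L(t, ‖x‖²) for all t ∈ [0,T], x ∈ H. Define the Picard iterates y₀(t) = y₀ and y_{n+1}(t) = y₀ + (1/Γ(α)) ∫₀ᵗ (t−s)^{α−1} f(s, y_n(s)) ds. Let x : [0,T] → [0,∞) be a continuous solution of the comparison equation x(t) = C₁ + C₂ ∫₀ᵗ L(s, x(s)) ds, where C₁ = 3‖y₀‖² and C₂ = 6 T^{2α−1}/(Γ(α)²(2α−1)). Then for every n ≥ 0 and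 every t ∈ [0,T], ‖y_n(t)‖² ≤ x(t); in particular sup_{n≥0} sup_{t∈[0,T]} ‖y_n(t)‖² ≤ x(T), so the Picard sequence is uniformly bounded. -/
open MeasureTheory Set

/-- Lemma 3.3 (deterministic part): the Picard iterates for the fractional Volterra
integral equation of order `α ∈ (1/2, 1)` are dominated by the solution `x` of the
scalar comparison equation `x t = 3‖y₀‖² + (6 T^(2α-1)/(Γ(α)² (2α-1))) ∫₀ᵗ L(s, x s) ds`;
in particular the Picard sequence is uniformly bounded by `x T`. -/
theorem stmt3 {H : Type*} [NormedAddCommGroup H] [InnerProductSpace ℝ H] [CompleteSpace H]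
    [MeasurableSpace H] [BorelSpace H]
    (T α : ℝ) (hT : 0 < T) (hα : α ∈ Ioo (1 / 2 : ℝ) 1)
    (y₀ : H) (f : ℝ → H → H)
    (hf_meas : Measurable (Function.uncurry f))
    (hf_cont : ∀ t ∈ Icc (0:ℝ) T, Continuous (f t))
    (L : ℝ → ℝ → ℝ)
    (hL_nonneg : ∀ t ∈ Icc (0:ℝ) T, ∀ u ∈ Ici (0:ℝ), 0 ≤ L t u)
    (hL_bdd : ∃ M : ℝ, ∀ t ∈ Icc (0:ℝ) T, ∀ u ∈ Ici (0:ℝ), L t u ≤ M)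
    (hL_meas : ∀ u ∈ Ici (0:ℝ), Measurable fun t => L t u)
    (hL_cont : ∀ t ∈ Icc (0:ℝ) T, ContinuousOn (fun u => L t u) (Ici 0))
    (hL_mono : ∀ t ∈ Icc (0:ℝ) T, MonotoneOn (fun u => L t u) (Ici 0))
    (hfL : ∀ t ∈ Icc (0:ℝ) T, ∀ x : H, ‖f t x‖ ^ 2 ≤ L t (‖x‖ ^ 2))
    (y : ℕ → ℝ → H)
    (hy0 : ∀ t : ℝ, y 0 t = y₀)
    (hy : ∀ n : ℕ, ∀ t ∈ Icc (0:ℝ) T,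
      y (n + 1) t
        = y₀ + (1 / Real.Gamma α) • ∫ s in (0:ℝ)..t, (t - s) ^ (α - 1) • f s (y n s))
    (x : ℝ → ℝ)
    (hx_cont : ContinuousOn x (Icc 0 T))
    (hx_nonneg : ∀ t ∈ Icc (0:ℝ) T, 0 ≤ x t)
    (hx : ∀ t ∈ Icc (0:ℝ) T,
      x t = 3 * ‖y₀‖ ^ 2
        + 6 * T ^ (2 * α - 1) / (Real.Gamma α ^ 2 * (2 * α - 1))
            * ∫ s in (0:ℝ)..t, L s (x s)) :
    (∀ n : ℕ, ∀ t ∈ Icc (0:ℝ) T, ‖y n t‖ ^ 2 ≤ x t) ∧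
      ∀ n : ℕ, ∀ t ∈ Icc (0:ℝ) T, ‖y n t‖ ^ 2 ≤ x T := by
  obtain ⟨hα1, hα2⟩ := hα
  obtain ⟨M, hM⟩ := hL_bdd
  have hΓ : 0 < Real.Gamma α := Real.Gamma_pos_of_pos (by linarith)
  have hD : 0 < 2 * α - 1 := by linarith
  have hTmem : T ∈ Icc (0:ℝ) T := ⟨hT.le, le_rfl⟩
  have hA : (0:ℝ) ≤ T ^ (2 * α - 1) := Real.rpow_nonneg hT.le _
  have hG2 : (0:ℝ) < Real.Gamma α ^ 2 := pow_pos hΓ 2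
  have hC2 : 0 ≤ 6 * T ^ (2 * α - 1) / (Real.Gamma α ^ 2 * (2 * α - 1)) :=
    div_nonneg (by linarith) (mul_pos hG2 hD).le
  -- clamp function and continuous extension of x
  set cl : ℝ → ℝ := fun s => max 0 (min s T) with hcldef
  have hcl_cont : Continuous cl := continuous_const.max (continuous_id.min continuous_const)
  have hcl_mem : ∀ s, cl s ∈ Icc (0:ℝ) T :=
    fun s => ⟨le_max_left _ _, max_le hT.le (min_le_right _ _)⟩
  have hcl_eq : ∀ s ∈ Icc (0:ℝ) T, cl s = s := by
    intro s hs
    simp only [hcldef]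
    rw [min_eq_left hs.2, max_eq_right hs.1]
  set x' : ℝ → ℝ := fun s => x (cl s) with hx'def
  have hx'_cont : Continuous x' := hx_cont.comp_continuous hcl_cont hcl_mem
  -- measurable version of s ↦ L s (x s)
  set u : ℝ → ℝ → ℝ := fun v t => if t ∈ Icc (0:ℝ) T then L t (max v 0) else 0 with hudef
  have hu_cont : ∀ t, Continuous fun v => u v t := by
    intro t
    by_cases ht : t ∈ Icc (0:ℝ) T
    · simp only [hudef, if_pos ht]
      exact (hL_cont t ht).comp_continuous (continuous_id.max continuous_const)
        (fun v => Set.mem_Ici.2 (le_max_right v 0))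
    · simp only [hudef, if_neg ht]; exact continuous_const
  have hu_meas : ∀ v, Measurable (u v) := by
    intro v
    exact Measurable.ite measurableSet_Icc (hL_meas (max v 0) (Set.mem_Ici.2 (le_max_right v 0))) measurable_const
  have hu2 : Measurable (Function.uncurry u) :=
    measurable_uncurry_of_continuous_of_measurable hu_cont hu_meas
  set φ : ℝ → ℝ := fun s => u (x' s) s with hφdef
  have hφ_meas : Measurable φ := hu2.comp (hx'_cont.measurable.prodMk measurable_id)
  have hφ_eq : ∀ s ∈ Icc (0:ℝ) T, φ s = L s (x s) := by
    intro s hs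
    simp only [hφdef, hudef, hx'def, if_pos hs, hcl_eq s hs, max_eq_left (hx_nonneg s hs)]
  have hφ_nonneg : ∀ s, 0 ≤ φ s := by
    intro s
    simp only [hφdef, hudef]
    split_ifs with hs
    · exact hL_nonneg s hs _ (Set.mem_Ici.2 (le_max_right _ _))
    · exact le_refl 0
  have hφ_le : ∀ s, φ s ≤ max M 0 := by
    intro s
    simp only [hφdef, hudef]
    split_ifs with hs
    · exact (hM s hs _ (Set.mem_Ici.2 (le_max_right _ _))).trans (le_max_left _ _)
    · exact le_max_right _ _
  have hφ_int : ∀ a b : ℝ, IntervalIntegrable φ volume a b := by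
    intro a b
    refine (intervalIntegrable_const (c := max M 0)).mono_fun' hφ_meas.aestronglyMeasurable ?_
    refine Filter.Eventually.of_forall fun s => ?_
    show ‖φ s‖ ≤ max M 0
    rw [Real.norm_of_nonneg (hφ_nonneg s)]; exact hφ_le s
  have hIeq : ∀ t ∈ Icc (0:ℝ) T, (∫ s in (0:ℝ)..t, L s (x s)) = ∫ s in (0:ℝ)..t, φ s := by
    intro t ht
    refine (intervalIntegral.integral_congr ?_).symm
    intro s hs
    rw [uIcc_of_le ht.1] at hs
    exact hφ_eq s ⟨hs.1, hs.2.trans ht.2⟩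
  have hJ_nonneg : ∀ t ∈ Icc (0:ℝ) T, 0 ≤ ∫ s in (0:ℝ)..t, φ s := fun t ht =>
    intervalIntegral.integral_nonneg ht.1 fun s _ => hφ_nonneg s
  -- monotonicity of x
  have hx_mono : ∀ t ∈ Icc (0:ℝ) T, x t ≤ x T := by
    intro t ht
    rw [hx t ht, hx T hTmem, hIeq t ht, hIeq T hTmem]
    have h1 : (∫ s in (0:ℝ)..T, φ s) - ∫ s in (0:ℝ)..t, φ s = ∫ s in t..T, φ s :=
      intervalIntegral.integral_interval_sub_left (hφ_int 0 T) (hφ_int 0 t)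
    have h2 : 0 ≤ ∫ s in t..T, φ s :=
      intervalIntegral.integral_nonneg ht.2 fun s _ => hφ_nonneg s
    have h3 : (∫ s in (0:ℝ)..t, φ s) ≤ ∫ s in (0:ℝ)..T, φ s := by linarith
    nlinarith [mul_le_mul_of_nonneg_left h3 hC2]
  -- main induction
  have main : ∀ n, ∀ t ∈ Icc (0:ℝ) T, ‖y n t‖ ^ 2 ≤ x t := by
    intro n
    induction n with
    | zero =>
      intro t ht
      rw [hy0 t, hx t ht, hIeq t ht]
      nlinarith [sq_nonneg ‖y₀‖, mul_nonneg hC2 (hJ_nonneg t ht)]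
    | succ n ih =>
      intro t ht
      have hJn := hJ_nonneg t ht
      rw [hy n t ht, hx t ht, hIeq t ht]
      set J : ℝ := ∫ s in (0:ℝ)..t, φ s with hJdef
      set I : H := ∫ s in (0:ℝ)..t, (t - s) ^ (α - 1) • f s (y n s) with hIdef
      have key : ‖I‖ ^ 2 ≤ T ^ (2 * α - 1) / (2 * α - 1) * J := by
        have hRHS : 0 ≤ T ^ (2 * α - 1) / (2 * α - 1) * J :=
          mul_nonneg (div_nonneg hA hD.le) hJn
        by_cases hInt :
            IntervalIntegrable (fun s => (t - s) ^ (α - 1) • f s (y n s)) volume 0 t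
        swap
        · rw [hIdef, intervalIntegral.integral_undef hInt]
          simpa using hRHS
        set k : ℝ → ℝ := fun s => (t - s) ^ (α - 1) with hkdef
        set g0 : ℝ → ℝ := fun s => ‖f s (y n s)‖ with hg0def
        have hk_meas : Measurable k := (measurable_const.sub measurable_id).pow measurable_const
        have hsubT : Icc (0:ℝ) t ⊆ Icc (0:ℝ) T := Icc_subset_Icc le_rfl ht.2
        have hk_nonneg : ∀ s ∈ Icc (0:ℝ) t, 0 ≤ k s := fun s hs =>
          Real.rpow_nonneg (by linarith [hs.2]) _
        -- ‖I‖ ≤ ∫ k * g0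
        have h1 : ‖I‖ ≤ ∫ s in (0:ℝ)..t, k s * g0 s := by
          refine (intervalIntegral.norm_integral_le_integral_norm ht.1).trans_eq ?_
          refine intervalIntegral.integral_congr ?_
          intro s hs
          rw [uIcc_of_le ht.1] at hs
          simp only [norm_smul, Real.norm_eq_abs, abs_of_nonneg (hk_nonneg s hs)]
          exact congrArg (· * ‖f s (y n s)‖) (abs_of_nonneg (hk_nonneg s hs))
        have hkg_int : IntervalIntegrable (fun s => k s * g0 s) volume 0 t := by
          refine hInt.norm.congr ?_
          intro s hs
          rw [uIoc_of_le ht.1] at hs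
          simp only [norm_smul, Real.norm_eq_abs,
            abs_of_nonneg (hk_nonneg s ⟨hs.1.le, hs.2⟩)]
          exact congrArg (· * ‖f s (y n s)‖) (abs_of_nonneg (hk_nonneg s ⟨hs.1.le, hs.2⟩))
        -- a.e. measurability of g0 on Ioc 0 t
        have hknz : ∀ᵐ s ∂(volume.restrict (Ioc 0 t)), k s ≠ 0 := by
          have h0 : ∀ᵐ s ∂(volume : Measure ℝ), s ≠ t := by
            rw [ae_iff]
            simpa using measure_singleton (α := ℝ) t
          filter_upwards [ae_restrict_of_ae h0, ae_restrict_mem measurableSet_Ioc] with s hs1 hs2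
          have : 0 < t - s := sub_pos.2 (lt_of_le_of_ne hs2.2 hs1)
          exact (Real.rpow_pos_of_pos this _).ne'
        have hkg_aesm : AEStronglyMeasurable (fun s => k s * g0 s)
            (volume.restrict (Ioc 0 t)) :=
          ((intervalIntegrable_iff_integrableOn_Ioc_of_le ht.1).1 hkg_int).1
        have hg0_aem : AEMeasurable g0 (volume.restrict (Ioc 0 t)) := by
          have heq : (fun s => (k s * g0 s) * (k s)⁻¹) =ᵐ[volume.restrict (Ioc 0 t)] g0 := by
            filter_upwards [hknz] with s hs
            field_simp
          exact (hkg_aesm.aemeasurable.mul hk_meas.inv.aemeasurable).congr heq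
        have hg0_aesm : AEStronglyMeasurable g0 (volume.restrict (Ioc 0 t)) :=
          hg0_aem.aestronglyMeasurable
        have hg0sq_le : ∀ s ∈ Icc (0:ℝ) t, g0 s ^ 2 ≤ φ s := by
          intro s hs
          have hsT := hsubT hs
          calc g0 s ^ 2 ≤ L s (‖y n s‖ ^ 2) := hfL s hsT (y n s)
            _ ≤ L s (x s) := hL_mono s hsT (Set.mem_Ici.2 (sq_nonneg _)) (hx_nonneg s hsT) (ih s hsT)
            _ = φ s := (hφ_eq s hsT).symm
        have hg0sq_int : IntegrableOn (fun s => g0 s ^ 2) (Ioc 0 t) volume := by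
          refine Integrable.mono' (g := fun _ => max M 0) ?_
            (hg0_aem.pow_const 2).aestronglyMeasurable ?_
          · exact integrableOn_const measure_Ioc_lt_top.ne
          · filter_upwards [ae_restrict_mem measurableSet_Ioc] with s hs
            rw [Real.norm_of_nonneg (sq_nonneg _)]
            exact (hg0sq_le s ⟨hs.1.le, hs.2⟩).trans (hφ_le s)
        have h2e : ENNReal.ofReal (2:ℝ) = 2 := by norm_num
        have hg0_mem : MemLp g0 (ENNReal.ofReal 2) (volume.restrict (Ioc 0 t)) := by
          rw [h2e]
          exact (memLp_two_iff_integrable_sq hg0_aesm).2 hg0sq_int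
        have hk2_intI : IntervalIntegrable (fun s => k s ^ 2) volume 0 t := by
          have base : IntervalIntegrable (fun s0 : ℝ => s0 ^ (2 * α - 2)) volume 0 t :=
            intervalIntegral.intervalIntegrable_rpow' (by linarith)
          have comp := (base.comp_sub_left t).symm
          simp only [sub_zero, sub_self] at comp
          refine comp.congr ?_
          intro s hs
          rw [uIoc_of_le ht.1] at hs
          simp only [hkdef]
          rw [← Real.rpow_natCast ((t - s) ^ (α - 1)) 2,
            ← Real.rpow_mul (by linarith [hs.2] : (0:ℝ) ≤ t - s)]
          congr 1; push_cast; ring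
        have hk2_int : IntegrableOn (fun s => k s ^ 2) (Ioc 0 t) volume :=
          (intervalIntegrable_iff_integrableOn_Ioc_of_le ht.1).1 hk2_intI
        have hk_mem : MemLp k (ENNReal.ofReal 2) (volume.restrict (Ioc 0 t)) := by
          rw [h2e]
          exact (memLp_two_iff_integrable_sq hk_meas.aestronglyMeasurable).2 hk2_int
        have hpq : (2:ℝ).HolderConjugate 2 := Real.HolderConjugate.two_two
        have hk_nonneg_ae : 0 ≤ᵐ[volume.restrict (Ioc 0 t)] k := by
          filter_upwards [ae_restrict_mem measurableSet_Ioc] with s hs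
          exact hk_nonneg s ⟨hs.1.le, hs.2⟩
        have hg0_nonneg_ae : 0 ≤ᵐ[volume.restrict (Ioc 0 t)] g0 :=
          Filter.Eventually.of_forall fun s => norm_nonneg _
        have hCS := integral_mul_le_Lp_mul_Lq_of_nonneg hpq hk_nonneg_ae hg0_nonneg_ae
          hk_mem hg0_mem
        have hcast : ∀ v : ℝ, v ^ (2:ℝ) = v ^ (2:ℕ) := fun v => by
          rw [show (2:ℝ) = ((2:ℕ):ℝ) by norm_num, Real.rpow_natCast]
        simp_rw [hcast] at hCS
        set a2 : ℝ := ∫ s in Ioc (0:ℝ) t, k s ^ 2 with ha2def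
        set b2 : ℝ := ∫ s in Ioc (0:ℝ) t, g0 s ^ 2 with hb2def
        have ha2_nonneg : 0 ≤ a2 := setIntegral_nonneg measurableSet_Ioc fun s _ => sq_nonneg _
        have hb2_nonneg : 0 ≤ b2 := setIntegral_nonneg measurableSet_Ioc fun s _ => sq_nonneg _
        have ha2_le : a2 ≤ T ^ (2 * α - 1) / (2 * α - 1) := by
          have e1 : a2 = ∫ s in (0:ℝ)..t, k s ^ 2 := (intervalIntegral.integral_of_le ht.1).symm
          have e2 : (∫ s in (0:ℝ)..t, k s ^ 2) = ∫ s in (0:ℝ)..t, (t - s) ^ (2 * α - 2) := by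
            refine intervalIntegral.integral_congr fun s hs => ?_
            rw [uIcc_of_le ht.1] at hs
            simp only [hkdef]
            rw [← Real.rpow_natCast ((t - s) ^ (α - 1)) 2,
              ← Real.rpow_mul (by linarith [hs.2] : (0:ℝ) ≤ t - s)]
            congr 1; push_cast; ring
          have e3 : (∫ s in (0:ℝ)..t, (t - s) ^ (2 * α - 2))
              = ∫ s in (0:ℝ)..t, s ^ (2 * α - 2) := by
            simpa using intervalIntegral.integral_comp_sub_left (a := 0) (b := t)
              (fun s : ℝ => s ^ (2 * α - 2)) t
          have e4 : (∫ s in (0:ℝ)..t, s ^ (2 * α - 2))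
              = (t ^ (2 * α - 2 + 1) - (0:ℝ) ^ (2 * α - 2 + 1)) / (2 * α - 2 + 1) :=
            integral_rpow (Or.inl (by linarith))
          have e5 : (2:ℝ) * α - 2 + 1 = 2 * α - 1 := by ring
          rw [e1, e2, e3, e4, e5, Real.zero_rpow (ne_of_gt (by linarith)), sub_zero]
          exact (div_le_div_iff_of_pos_right hD).2 (Real.rpow_le_rpow ht.1 ht.2 hD.le)
        have hb2_le : b2 ≤ J := by
          have e1 : b2 = ∫ s in (0:ℝ)..t, g0 s ^ 2 :=
            (intervalIntegral.integral_of_le ht.1).symm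
          rw [e1, hJdef]
          exact intervalIntegral.integral_mono_on ht.1
            ((intervalIntegrable_iff_integrableOn_Ioc_of_le ht.1).2 hg0sq_int)
            (hφ_int 0 t) hg0sq_le
        have h1' : ‖I‖ ≤ a2 ^ ((1:ℝ)/2) * b2 ^ ((1:ℝ)/2) := by
          refine h1.trans ?_
          rw [intervalIntegral.integral_of_le ht.1]
          exact hCS
        have hI2 : ‖I‖ ^ 2 ≤ a2 * b2 := by
          calc ‖I‖ ^ 2 ≤ (a2 ^ ((1:ℝ)/2) * b2 ^ ((1:ℝ)/2)) ^ 2 :=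
                pow_le_pow_left₀ (norm_nonneg I) h1' 2
            _ = a2 * b2 := by
                rw [mul_pow, ← Real.rpow_natCast (a2 ^ ((1:ℝ)/2)) 2,
                  ← Real.rpow_mul ha2_nonneg,
                  ← Real.rpow_natCast (b2 ^ ((1:ℝ)/2)) 2, ← Real.rpow_mul hb2_nonneg]
                norm_num
        exact hI2.trans (mul_le_mul ha2_le hb2_le hb2_nonneg (div_nonneg hA hD.le))
      -- combine the key estimate with the algebra
      have hnorm : ‖y₀ + (1 / Real.Gamma α) • I‖ ≤ ‖y₀‖ + (1 / Real.Gamma α) * ‖I‖ := by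
        refine (norm_add_le _ _).trans ?_
        rw [norm_smul, Real.norm_of_nonneg (by positivity)]
      have hsq : ‖y₀ + (1 / Real.Gamma α) • I‖ ^ 2
          ≤ (‖y₀‖ + (1 / Real.Gamma α) * ‖I‖) ^ 2 :=
        pow_le_pow_left₀ (norm_nonneg _) hnorm 2
      have hgne : Real.Gamma α ≠ 0 := hΓ.ne'
      have hDne : (2:ℝ) * α - 1 ≠ 0 := hD.ne'
      set B : ℝ := T ^ (2 * α - 1) / (2 * α - 1) * J with hBdef
      have hB_nonneg : 0 ≤ B := mul_nonneg (div_nonneg hA hD.le) hJn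
      have e0 : 6 * T ^ (2 * α - 1) / (Real.Gamma α ^ 2 * (2 * α - 1)) * J
          = 6 * B / Real.Gamma α ^ 2 := by
        rw [hBdef]; field_simp
      rw [e0]
      set p := ‖y₀‖ with hpdef
      set i := ‖I‖ with hidef
      set g := Real.Gamma α with hgdef
      have e1 : (p + (1 / g) * i) ^ 2 = p ^ 2 + 2 * p * i / g + i ^ 2 / g ^ 2 := by
        field_simp; ring
      have e2 : 2 * p * i / g ≤ p ^ 2 + i ^ 2 / g ^ 2 := by
        have h := sq_nonneg (p - i / g)
        have e : (p - i / g) ^ 2 = p ^ 2 - 2 * p * i / g + i ^ 2 / g ^ 2 := by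
          field_simp; ring
        rw [e] at h; linarith
      have e3 : i ^ 2 / g ^ 2 ≤ B / g ^ 2 := (div_le_div_iff_of_pos_right hG2).2 key
      have e4 : 0 ≤ B / g ^ 2 := div_nonneg hB_nonneg hG2.le
      have e5 : 0 ≤ p ^ 2 := sq_nonneg p
      calc ‖y₀ + (1 / g) • I‖ ^ 2 ≤ (p + (1 / g) * i) ^ 2 := hsq
        _ ≤ 3 * p ^ 2 + 6 * B / g ^ 2 := by
            have e6 : 6 * B / g ^ 2 = 6 * (B / g ^ 2) := by ring
            rw [e1, e6]; linarith
  exact ⟨main, fun n t ht => (main n t ht).trans (hx_mono t ht)⟩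
end

section
/- Let H be a real Hilbert space, T > 0, α ∈ (1/2, 1), y₀ ∈ H, and let f : [0,T] × H → H satisfy ‖f(t,x) − f(t,y)‖² ≤ ρ(‖x − y‖²) for all t ∈ [0,T] and x, y ∈ H, where ρ : [0,∞) → [0,∞) is continuous, non-decreasing, ρ(0) = 0, ρ(u) > 0 for u > 0, and ∫₀¹ du/ρ(u) = ∞. If x, y : [0,T] → H are two continuous functions both satisfying z(t) = y₀ + (1/Γ(α)) ∫₀ᵗ (t−s)^{α−1} f(s, z(s)) ds for all t ∈ [0,T] (and s ↦ ‖f(s,x(s))‖², s ↦ ‖f(s,y(s))‖² are integrable), then x(t) = y(t) for all t ∈ [0,T]. -/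
open MeasureTheory Set
open scoped ENNReal

lemma osgood_aux {T C : ℝ} (hT : 0 < T) (hC : 0 ≤ C) (ρ : ℝ → ℝ)
    (hρ_nonneg : ∀ u ∈ Ici (0:ℝ), 0 ≤ ρ u)
    (hρ_cont : ContinuousOn ρ (Ici 0))
    (hρ_mono : MonotoneOn ρ (Ici 0))
    (hρ_pos : ∀ u : ℝ, 0 < u → 0 < ρ u)
    (hOsgood : ∫⁻ u in Ioc (0:ℝ) 1, ENNReal.ofReal (1 / ρ u) = ⊤)
    (φ : ℝ → ℝ) (hφ_cont : ContinuousOn φ (Icc 0 T))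
    (hφ_nonneg : ∀ t ∈ Icc (0:ℝ) T, 0 ≤ φ t)
    (hineq : ∀ t ∈ Icc (0:ℝ) T, φ t ≤ C * ∫ s in (0:ℝ)..t, ρ (φ s)) :
    ∀ t ∈ Icc (0:ℝ) T, φ t = 0 := by
  intro t₁ ht₁
  by_contra hne
  have hφpos : 0 < φ t₁ := (hφ_nonneg t₁ ht₁).lt_of_ne (Ne.symm hne)
  set g : ℝ → ℝ := fun s => ρ (φ s) with hgdef
  have hg_cont : ContinuousOn g (Icc 0 T) :=
    hρ_cont.comp hφ_cont fun s hs => hφ_nonneg s hs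
  have hg_nonneg : ∀ s ∈ Icc (0:ℝ) T, 0 ≤ g s := fun s hs => hρ_nonneg _ (hφ_nonneg s hs)
  set ψ : ℝ → ℝ := fun t => C * ∫ s in (0:ℝ)..t, g s with hψdef
  have ht₁T : t₁ ≤ T := ht₁.2
  have ht₁0 : 0 ≤ t₁ := ht₁.1
  have hgint : ∀ b ∈ Icc (0:ℝ) T, IntervalIntegrable g volume 0 b := by
    intro b hb
    apply (hg_cont.mono _).intervalIntegrable
    rw [uIcc_of_le hb.1]
    exact Icc_subset_Icc le_rfl hb.2
  have hψ_cont : ContinuousOn ψ (Icc 0 T) := by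
    have h1 : IntegrableOn g (uIcc 0 T) volume := by
      rw [uIcc_of_le hT.le]; exact hg_cont.integrableOn_Icc
    have h2 := intervalIntegral.continuousOn_primitive_interval (a := 0) (b := T)
      (μ := volume) (f := g) h1
    rw [uIcc_of_le hT.le] at h2
    exact continuousOn_const.mul h2
  have hψ0 : ψ 0 = 0 := by simp [hψdef]
  have hψ_mono : MonotoneOn ψ (Icc 0 T) := by
    intro a ha b hb hab
    have h1 : (∫ s in (0:ℝ)..b, g s) - ∫ s in (0:ℝ)..a, g s = ∫ s in a..b, g s :=
      intervalIntegral.integral_interval_sub_left (hgint b hb) (hgint a ha)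
    have h2 : 0 ≤ ∫ s in a..b, g s :=
      intervalIntegral.integral_nonneg hab fun u hu =>
        hg_nonneg u ⟨le_trans ha.1 hu.1, le_trans hu.2 hb.2⟩
    have h3 : (∫ s in (0:ℝ)..a, g s) ≤ ∫ s in (0:ℝ)..b, g s := by linarith
    exact mul_le_mul_of_nonneg_left h3 hC
  have hφleψ : ∀ s ∈ Icc (0:ℝ) T, φ s ≤ ψ s := hineq
  have hψt₁pos : 0 < ψ t₁ := lt_of_lt_of_le hφpos (hφleψ t₁ ht₁)
  have hψ_deriv : ∀ s ∈ Ioo (0:ℝ) T, HasDerivAt ψ (C * g s) s := by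
    intro s hs
    have hmem : Icc (0:ℝ) T ∈ nhds s := Icc_mem_nhds hs.1 hs.2
    have hca : ContinuousAt g s := hg_cont.continuousAt hmem
    have hmeas : StronglyMeasurableAtFilter g (nhds s) volume :=
      (hg_cont.mono Ioo_subset_Icc_self).stronglyMeasurableAtFilter isOpen_Ioo s hs
    exact (intervalIntegral.integral_hasDerivAt_right (hgint s ⟨hs.1.le, hs.2.le⟩)
      hmeas hca).const_mul C
  -- key inequality
  have key : ∀ ε : ℝ, 0 < ε → ε < ψ t₁ → (∫ u in ε..(ψ t₁), 1 / ρ u) ≤ C * T := by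
    intro ε hε0 hεlt
    obtain ⟨tε, htε_mem, htε⟩ :=
      intermediate_value_Icc ht₁0 (hψ_cont.mono (Icc_subset_Icc le_rfl ht₁T))
        (show ε ∈ Icc (ψ 0) (ψ t₁) from ⟨by rw [hψ0]; exact hε0.le, hεlt.le⟩)
    have htε0 : 0 ≤ tε := htε_mem.1
    have htεt₁ : tε ≤ t₁ := htε_mem.2
    have htεT : tε ≤ T := htεt₁.trans ht₁T
    have hsubIcc : Icc tε t₁ ⊆ Icc (0:ℝ) T := Icc_subset_Icc htε0 ht₁T
    have hψge : ∀ s ∈ Icc tε t₁, ε ≤ ψ s := by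
      intro s hs
      rw [← htε]
      exact hψ_mono ⟨htε0, htεT⟩ (hsubIcc hs) hs.1
    have h1ρ : ContinuousOn (fun u => 1 / ρ u) (Ici ε) := by
      apply continuousOn_const.div (hρ_cont.mono (Ici_subset_Ici.2 hε0.le))
      intro v hv
      exact ne_of_gt (lt_of_lt_of_le (hρ_pos ε hε0)
        (hρ_mono hε0.le (hε0.le.trans hv) hv))
    have hρψpos : ∀ s ∈ Icc tε t₁, 0 < ρ (ψ s) := fun s hs =>
      lt_of_lt_of_le (hρ_pos ε hε0) (hρ_mono hε0.le (hε0.le.trans (hψge s hs)) (hψge s hs))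
    have hsub : (∫ s in tε..t₁, (C * g s) • ((fun u => 1 / ρ u) ∘ ψ) s)
        = ∫ u in ψ tε..ψ t₁, 1 / ρ u := by
      apply intervalIntegral.integral_comp_smul_deriv''
      · rw [uIcc_of_le htεt₁]; exact hψ_cont.mono hsubIcc
      · rw [min_eq_left htεt₁, max_eq_right htεt₁]
        intro s hs
        exact (hψ_deriv s ⟨lt_of_le_of_lt htε0 hs.1, lt_of_lt_of_le hs.2 ht₁T⟩).hasDerivWithinAt
      · rw [uIcc_of_le htεt₁]
        exact continuousOn_const.mul (hg_cont.mono hsubIcc)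
      · apply h1ρ.mono
        rw [uIcc_of_le htεt₁]
        rintro v ⟨s, hs, rfl⟩
        exact hψge s hs
    have hbound : (∫ s in tε..t₁, (C * g s) • ((fun u => 1 / ρ u) ∘ ψ) s) ≤ C * T := by
      have hcont_int : ContinuousOn (fun s => (C * g s) • ((fun u => 1 / ρ u) ∘ ψ) s)
          (Icc tε t₁) := by
        apply (continuousOn_const.mul (hg_cont.mono hsubIcc)).smul
        exact h1ρ.comp (hψ_cont.mono hsubIcc) fun s hs => hψge s hs
      have hInt1 : IntervalIntegrable (fun s => (C * g s) • ((fun u => 1 / ρ u) ∘ ψ) s)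
          volume tε t₁ := by
        apply (hcont_int.mono _).intervalIntegrable
        rw [uIcc_of_le htεt₁]
      have hptwise : ∀ s ∈ Icc tε t₁,
          (C * g s) • ((fun u => 1 / ρ u) ∘ ψ) s ≤ C := by
        intro s hs
        have h1 : g s ≤ ρ (ψ s) := by
          have hφs := hφ_nonneg s (hsubIcc hs)
          exact hρ_mono hφs (hφs.trans (hφleψ s (hsubIcc hs))) (hφleψ s (hsubIcc hs))
        have h2 : 0 < ρ (ψ s) := hρψpos s hs
        have h3 : g s / ρ (ψ s) ≤ 1 := (div_le_one h2).2 h1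
        have : (C * g s) • ((fun u => 1 / ρ u) ∘ ψ) s = C * (g s / ρ (ψ s)) := by
          simp [smul_eq_mul, Function.comp]
          ring
        rw [this]
        calc C * (g s / ρ (ψ s)) ≤ C * 1 := mul_le_mul_of_nonneg_left h3 hC
          _ = C := mul_one C
      calc (∫ s in tε..t₁, (C * g s) • ((fun u => 1 / ρ u) ∘ ψ) s)
          ≤ ∫ _ in tε..t₁, C :=
            intervalIntegral.integral_mono_on htεt₁ hInt1 intervalIntegrable_const hptwise
        _ = (t₁ - tε) * C := by rw [intervalIntegral.integral_const]; simp [smul_eq_mul]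
        _ ≤ T * C := by
            apply mul_le_mul_of_nonneg_right _ hC
            linarith
        _ = C * T := mul_comm _ _
    rw [hsub, htε] at hbound
    exact hbound
  -- contradiction via the Osgood condition
  set b := min 1 (ψ t₁) with hbdef
  have hb0 : 0 < b := lt_min one_pos hψt₁pos
  have hb1 : b ≤ 1 := min_le_left _ _
  have hbψ : b ≤ ψ t₁ := min_le_right _ _
  have htop : ∫⁻ u in Ioc (0:ℝ) b, ENNReal.ofReal (1 / ρ u) = ⊤ := by
    by_contra hfin
    have h2 : (∫⁻ u in Ioc b 1, ENNReal.ofReal (1 / ρ u)) < ⊤ := by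
      have hb' : ∀ᵐ u ∂(volume.restrict (Ioc b 1)),
          ENNReal.ofReal (1 / ρ u) ≤ ENNReal.ofReal (1 / ρ b) := by
        filter_upwards [ae_restrict_mem measurableSet_Ioc] with u hu
        apply ENNReal.ofReal_le_ofReal
        apply one_div_le_one_div_of_le (hρ_pos b hb0)
        exact hρ_mono hb0.le (hb0.le.trans hu.1.le) hu.1.le
      calc (∫⁻ u in Ioc b 1, ENNReal.ofReal (1 / ρ u))
          ≤ ∫⁻ _ in Ioc b 1, ENNReal.ofReal (1 / ρ b) := lintegral_mono_ae hb'
        _ = ENNReal.ofReal (1 / ρ b) * volume (Ioc b 1) := by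
            rw [setLIntegral_const]
        _ < ⊤ := ENNReal.mul_lt_top ENNReal.ofReal_lt_top (by
            rw [Real.volume_Ioc]; exact ENNReal.ofReal_lt_top)
    have hsplit : Ioc (0:ℝ) 1 = Ioc 0 b ∪ Ioc b 1 := (Ioc_union_Ioc_eq_Ioc hb0.le hb1).symm
    have hle : (∫⁻ u in Ioc (0:ℝ) 1, ENNReal.ofReal (1 / ρ u))
        ≤ (∫⁻ u in Ioc (0:ℝ) b, ENNReal.ofReal (1 / ρ u))
          + ∫⁻ u in Ioc b 1, ENNReal.ofReal (1 / ρ u) := by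
      rw [hsplit]
      exact lintegral_union_le _ _ _
    rw [hOsgood] at hle
    exact absurd (eq_top_iff.2 hle)
      (ENNReal.add_ne_top.2 ⟨hfin, h2.ne⟩)
  -- each truncated lintegral is bounded
  have hεle : ∀ n : ℕ, (∫⁻ u in Ioc (b / (n + 2)) b, ENNReal.ofReal (1 / ρ u))
      ≤ ENNReal.ofReal (C * T) := by
    intro n
    have hn2 : (0:ℝ) < n + 2 := by positivity
    have hεn0 : 0 < b / (n + 2) := div_pos hb0 hn2
    have hεnb : b / (n + 2) < b := div_lt_self hb0 (by have := Nat.cast_nonneg (α := ℝ) n; linarith)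
    have hεψ : b / (n + 2) < ψ t₁ := hεnb.trans_le hbψ
    have hreal := key _ hεn0 hεψ
    have h1ρ : ContinuousOn (fun u => 1 / ρ u) (Icc (b / (n+2)) (ψ t₁)) := by
      apply continuousOn_const.div (hρ_cont.mono _)
      · intro v hv
        exact ne_of_gt (lt_of_lt_of_le (hρ_pos _ hεn0) (hρ_mono hεn0.le (hεn0.le.trans hv.1) hv.1))
      · exact fun v hv => hεn0.le.trans hv.1
    have hint : IntegrableOn (fun u => 1 / ρ u) (Ioc (b / (n+2)) (ψ t₁)) volume :=
      h1ρ.integrableOn_Icc.mono_set Ioc_subset_Icc_self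
    have hnn : 0 ≤ᵐ[volume.restrict (Ioc (b / (n+2)) (ψ t₁))] fun u => 1 / ρ u := by
      filter_upwards [ae_restrict_mem measurableSet_Ioc] with u hu
      exact one_div_nonneg.2 (hρ_nonneg u (hεn0.le.trans hu.1.le))
    have heq : ENNReal.ofReal (∫ u in Ioc (b / (n+2)) (ψ t₁), 1 / ρ u)
        = ∫⁻ u in Ioc (b / (n+2)) (ψ t₁), ENNReal.ofReal (1 / ρ u) :=
      ofReal_integral_eq_lintegral_ofReal hint hnn
    calc (∫⁻ u in Ioc (b / (n + 2)) b, ENNReal.ofReal (1 / ρ u))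
        ≤ ∫⁻ u in Ioc (b / (n+2)) (ψ t₁), ENNReal.ofReal (1 / ρ u) :=
          lintegral_mono_set (Ioc_subset_Ioc le_rfl hbψ)
      _ = ENNReal.ofReal (∫ u in Ioc (b / (n+2)) (ψ t₁), 1 / ρ u) := heq.symm
      _ ≤ ENNReal.ofReal (C * T) := by
          apply ENNReal.ofReal_le_ofReal
          rwa [← intervalIntegral.integral_of_le hεψ.le]
  -- monotone convergence to get a contradiction
  have hFmeas : AEMeasurable (fun u => ENNReal.ofReal (1 / ρ u)) (volume.restrict (Ioc (0:ℝ) b)) := by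
    have h1 : AEMeasurable ρ (volume.restrict (Ici (0:ℝ))) :=
      hρ_cont.aemeasurable measurableSet_Ici
    have h2 : AEMeasurable ρ (volume.restrict (Ioc (0:ℝ) b)) :=
      h1.mono_measure (Measure.restrict_mono (fun u hu => hu.1.le) le_rfl)
    have h3 : AEMeasurable (fun u => 1 / ρ u) (volume.restrict (Ioc (0:ℝ) b)) := by
      simp only [one_div]; exact h2.inv
    exact ENNReal.measurable_ofReal.comp_aemeasurable h3
  set F : ℕ → ℝ → ENNReal :=
    fun n => (Ioi (b / (n + 2))).indicator fun u => ENNReal.ofReal (1 / ρ u) with hFdef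
  have hFmono : ∀ u : ℝ, Monotone fun n => F n u := by
    intro u
    intro m n hmn
    apply indicator_le_indicator_of_subset _ (fun _ => zero_le)
    apply Ioi_subset_Ioi
    have hc : (m:ℝ) + 2 ≤ (n:ℝ) + 2 := by
      have := (Nat.cast_le (α := ℝ)).2 hmn; linarith
    exact div_le_div_of_nonneg_left hb0.le (by positivity) hc
  have hsup : ∀ᵐ u ∂(volume.restrict (Ioc (0:ℝ) b)),
      (⨆ n, F n u) = ENNReal.ofReal (1 / ρ u) := by
    filter_upwards [ae_restrict_mem measurableSet_Ioc] with u hu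
    obtain ⟨n, hn⟩ := exists_nat_gt (b / u)
    have hun : b / (n + 2) < u := by
      rw [div_lt_iff₀ (by positivity)]
      rw [div_lt_iff₀ hu.1] at hn
      nlinarith [hu.1]
    apply le_antisymm
    · exact iSup_le fun n => indicator_le_self _ _ u
    · have hFn : F n u = ENNReal.ofReal (1 / ρ u) := by
        simp only [hFdef]
        exact indicator_of_mem (mem_Ioi.2 hun) _
      exact le_iSup_of_le n hFn.ge
  have hMCT : (∫⁻ u in Ioc (0:ℝ) b, ENNReal.ofReal (1 / ρ u))
      = ⨆ n, ∫⁻ u in Ioc (0:ℝ) b, F n u := by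
    rw [← lintegral_congr_ae hsup]
    exact lintegral_iSup' (fun n => hFmeas.indicator measurableSet_Ioi)
      (Filter.Eventually.of_forall hFmono)
  have hFn_eq : ∀ n : ℕ, (∫⁻ u in Ioc (0:ℝ) b, F n u)
      = ∫⁻ u in Ioc (b / (n + 2)) b, ENNReal.ofReal (1 / ρ u) := by
    intro n
    have hεn0 : 0 < b / (n + 2) := div_pos hb0 (by positivity)
    simp only [hFdef]
    rw [lintegral_indicator measurableSet_Ioi]
    rw [Measure.restrict_restrict measurableSet_Ioi]
    have hset : Ioi (b / ((n:ℝ) + 2)) ∩ Ioc 0 b = Ioc (b / ((n:ℝ) + 2)) b := by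
      ext u
      constructor
      · rintro ⟨h1, _, h3⟩
        exact ⟨h1, h3⟩
      · rintro ⟨h1, h2⟩
        exact ⟨h1, hεn0.trans h1, h2⟩
    rw [hset]
  rw [htop] at hMCT
  have : (⊤ : ENNReal) ≤ ENNReal.ofReal (C * T) := by
    rw [hMCT]
    apply iSup_le
    intro n
    rw [hFn_eq n]
    exact hεle n
  exact absurd (eq_top_iff.2 this).symm (by simp [ENNReal.ofReal_lt_top.ne])

/-- Theorem 3.1, uniqueness part (deterministic part of the equation): under the
Osgood-type non-Lipschitz condition (A2), any two continuous solutions of the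
fractional Volterra integral equation of order `α ∈ (1/2, 1)` coincide on `[0, T]`. -/
theorem stmt6 {H : Type*} [NormedAddCommGroup H] [InnerProductSpace ℝ H] [CompleteSpace H]
    (T α : ℝ) (hT : 0 < T) (hα : α ∈ Ioo (1 / 2 : ℝ) 1)
    (y₀ : H) (f : ℝ → H → H)
    (ρ : ℝ → ℝ)
    (hρ_nonneg : ∀ u ∈ Ici (0:ℝ), 0 ≤ ρ u)
    (hρ_cont : ContinuousOn ρ (Ici 0))
    (hρ_mono : MonotoneOn ρ (Ici 0))
    (hρ_zero : ρ 0 = 0)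
    (hρ_pos : ∀ u : ℝ, 0 < u → 0 < ρ u)
    (hOsgood : ∫⁻ u in Ioc (0:ℝ) 1, ENNReal.ofReal (1 / ρ u) = ⊤)
    (hfρ : ∀ t ∈ Icc (0:ℝ) T, ∀ u v : H, ‖f t u - f t v‖ ^ 2 ≤ ρ (‖u - v‖ ^ 2))
    (x y : ℝ → H)
    (hx_cont : ContinuousOn x (Icc 0 T))
    (hy_cont : ContinuousOn y (Icc 0 T))
    (hfx_meas : AEStronglyMeasurable (fun s => f s (x s)) (volume.restrict (Ioc 0 T)))
    (hfy_meas : AEStronglyMeasurable (fun s => f s (y s)) (volume.restrict (Ioc 0 T)))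
    (hfx_int : IntegrableOn (fun s => ‖f s (x s)‖ ^ 2) (Ioc 0 T))
    (hfy_int : IntegrableOn (fun s => ‖f s (y s)‖ ^ 2) (Ioc 0 T))
    (hx : ∀ t ∈ Icc (0:ℝ) T,
      x t = y₀ + (1 / Real.Gamma α) • ∫ s in (0:ℝ)..t, (t - s) ^ (α - 1) • f s (x s))
    (hy : ∀ t ∈ Icc (0:ℝ) T,
      y t = y₀ + (1 / Real.Gamma α) • ∫ s in (0:ℝ)..t, (t - s) ^ (α - 1) • f s (y s)) :
    ∀ t ∈ Icc (0:ℝ) T, x t = y t := by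
  obtain ⟨hα1, hα2⟩ := hα
  have hΓ : 0 < Real.Gamma α := Real.Gamma_pos_of_pos (by linarith)
  have h2α : 0 < 2 * α - 1 := by linarith
  set D : ℝ := T ^ (2 * α - 1) / (2 * α - 1) with hDdef
  have hD0 : 0 < D := div_pos (Real.rpow_pos_of_pos hT _) h2α
  set C : ℝ := (1 / Real.Gamma α) ^ 2 * D with hCdef
  have hC : 0 ≤ C := by positivity
  set φ : ℝ → ℝ := fun s => ‖x s - y s‖ ^ 2 with hφdef
  have hφ_cont : ContinuousOn φ (Icc 0 T) := ((hx_cont.sub hy_cont).norm).pow 2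
  have hφ_nonneg : ∀ t ∈ Icc (0:ℝ) T, 0 ≤ φ t := fun t _ => by positivity
  have hρφ_cont : ContinuousOn (fun s => ρ (φ s)) (Icc 0 T) :=
    hρ_cont.comp hφ_cont fun s hs => hφ_nonneg s hs
  -- the key integral inequality
  have key : ∀ t ∈ Icc (0:ℝ) T, φ t ≤ C * ∫ s in (0:ℝ)..t, ρ (φ s) := by
    intro t ht
    obtain ⟨ht0, htT⟩ := ht
    rcases eq_or_lt_of_le ht0 with ht0' | ht0'
    · subst ht0'
      have h1 : x 0 = y₀ := by
        rw [hx 0 ⟨le_rfl, hT.le⟩]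
        simp
      have h2 : y 0 = y₀ := by
        rw [hy 0 ⟨le_rfl, hT.le⟩]
        simp
      simp [hφdef, h1, h2]
    -- now 0 < t
    set μt := volume.restrict (Ioc (0:ℝ) t) with hμtdef
    set k : ℝ → ℝ := fun s => (t - s) ^ (α - 1) with hkdef
    have hkII : IntervalIntegrable k volume 0 t := by
      have h := (intervalIntegral.intervalIntegrable_rpow' (a := 0) (b := t)
        (r := α - 1) (by linarith)).comp_sub_left t
      simpa using h.symm
    have hkIoc : IntegrableOn k (Ioc 0 t) :=
      (intervalIntegrable_iff_integrableOn_Ioc_of_le ht0).1 hkII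
    have hk2Int : IntegrableOn (fun s => (t - s) ^ (2 * α - 2)) (Ioc 0 t) := by
      have h := (intervalIntegral.intervalIntegrable_rpow' (a := 0) (b := t)
        (r := 2 * α - 2) (by linarith)).comp_sub_left t
      have h2 : IntervalIntegrable (fun s => (t - s) ^ (2 * α - 2)) volume 0 t := by
        simpa using h.symm
      exact (intervalIntegrable_iff_integrableOn_Ioc_of_le ht0).1 h2
    have hkk : ∀ s ∈ Ioc (0:ℝ) t, k s ^ 2 = (t - s) ^ (2 * α - 2) := by
      intro s hs
      have hts : (0:ℝ) ≤ t - s := by linarith [hs.2]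
      rw [hkdef]
      rw [← Real.rpow_natCast ((t - s) ^ (α - 1)) 2, ← Real.rpow_mul hts]
      norm_num
      ring_nf
    have hk2 : MemLp k 2 μt := by
      rw [memLp_two_iff_integrable_sq hkIoc.aestronglyMeasurable]
      apply hk2Int.congr_fun (fun s hs => (hkk s hs).symm) measurableSet_Ioc
    have hsubT : Ioc (0:ℝ) t ⊆ Ioc (0:ℝ) T := Ioc_subset_Ioc le_rfl htT
    have hfx2 : MemLp (fun s => f s (x s)) 2 μt := by
      rw [memLp_two_iff_integrable_sq_norm
        (hfx_meas.mono_measure (Measure.restrict_mono hsubT le_rfl))]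
      exact hfx_int.mono_set hsubT
    have hfy2 : MemLp (fun s => f s (y s)) 2 μt := by
      rw [memLp_two_iff_integrable_sq_norm
        (hfy_meas.mono_measure (Measure.restrict_mono hsubT le_rfl))]
      exact hfy_int.mono_set hsubT
    have hΔ2 : MemLp (fun s => f s (x s) - f s (y s)) 2 μt := hfx2.sub hfy2
    have hhalf : (1 : ℝ≥0∞) / 1 = 1 / 2 + 1 / 2 := by
      rw [ENNReal.add_halves]
      simp
    have hIx : IntegrableOn (fun s => k s • f s (x s)) (Ioc 0 t) :=
      memLp_one_iff_integrable.1 (hfx2.smul hk2 (r := 1))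
    have hIy : IntegrableOn (fun s => k s • f s (y s)) (Ioc 0 t) :=
      memLp_one_iff_integrable.1 (hfy2.smul hk2 (r := 1))
    have hIxI : IntervalIntegrable (fun s => k s • f s (x s)) volume 0 t :=
      (intervalIntegrable_iff_integrableOn_Ioc_of_le ht0).2 hIx
    have hIyI : IntervalIntegrable (fun s => k s • f s (y s)) volume 0 t :=
      (intervalIntegrable_iff_integrableOn_Ioc_of_le ht0).2 hIy
    -- difference formula
    have hdiff : x t - y t
        = (1 / Real.Gamma α) • ∫ s in (0:ℝ)..t, k s • (f s (x s) - f s (y s)) := by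
      rw [hx t ⟨ht0, htT⟩, hy t ⟨ht0, htT⟩, add_sub_add_left_eq_sub, ← smul_sub,
        ← intervalIntegral.integral_sub hIxI hIyI]
      congr 1
      apply intervalIntegral.integral_congr
      intro s _
      simp only [smul_sub]
    have hknn : ∀ s ∈ Ioc (0:ℝ) t, 0 ≤ k s := by
      intro s hs
      exact Real.rpow_nonneg (by linarith [hs.2]) _
    -- norm bound with Cauchy–Schwarz
    have hnorm1 : ‖∫ s in (0:ℝ)..t, k s • (f s (x s) - f s (y s))‖
        ≤ ∫ s in Ioc (0:ℝ) t, k s * ‖f s (x s) - f s (y s)‖ := by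
      rw [intervalIntegral.integral_of_le ht0]
      refine le_trans (norm_integral_le_integral_norm _) ?_
      apply le_of_eq
      apply setIntegral_congr_fun measurableSet_Ioc
      intro s hs
      simp only [norm_smul, Real.norm_eq_abs, abs_of_nonneg (hknn s hs)]
    have hpq : Real.HolderConjugate 2 2 := Real.HolderConjugate.two_two
    have hCS : ∫ s in Ioc (0:ℝ) t, k s * ‖f s (x s) - f s (y s)‖
        ≤ (∫ s in Ioc (0:ℝ) t, k s ^ (2:ℝ)) ^ (1/2 : ℝ)
          * (∫ s in Ioc (0:ℝ) t, ‖f s (x s) - f s (y s)‖ ^ (2:ℝ)) ^ (1/2 : ℝ) := by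
      apply integral_mul_le_Lp_mul_Lq_of_nonneg hpq
      · filter_upwards [ae_restrict_mem measurableSet_Ioc] with s hs using hknn s hs
      · exact Filter.Eventually.of_forall fun s => norm_nonneg _
      · rw [show ENNReal.ofReal (2:ℝ) = 2 by norm_num]
        exact hk2
      · rw [show ENNReal.ofReal (2:ℝ) = 2 by norm_num]
        exact hΔ2.norm
    have hrpow2 : ∀ z : ℝ, z ^ (2:ℝ) = z ^ (2:ℕ) := fun z => by
      rw [show (2:ℝ) = ((2:ℕ):ℝ) by norm_num, Real.rpow_natCast]
    -- bound the kernel integral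
    have hkint_eq : ∫ s in Ioc (0:ℝ) t, k s ^ (2:ℕ) = t ^ (2*α - 1) / (2*α - 1) := by
      rw [setIntegral_congr_fun measurableSet_Ioc hkk]
      rw [← intervalIntegral.integral_of_le ht0]
      rw [intervalIntegral.integral_comp_sub_left (fun u => u ^ (2*α - 2)) t]
      simp only [sub_self, sub_zero]
      rw [integral_rpow (Or.inl (by linarith))]
      rw [Real.zero_rpow (by linarith : 2*α - 2 + 1 ≠ 0)]
      ring_nf
    have hkint_le : ∫ s in Ioc (0:ℝ) t, k s ^ (2:ℕ) ≤ D := by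
      rw [hkint_eq, hDdef]
      gcongr
    -- bound the Δf integral
    have hρφ_int : IntegrableOn (fun s => ρ (φ s)) (Ioc 0 t) :=
      (hρφ_cont.integrableOn_Icc.mono_set Ioc_subset_Icc_self).mono_set
        (Ioc_subset_Ioc le_rfl htT) |>.mono_set (fun s hs => hs)
    have hΔsq_meas : AEStronglyMeasurable (fun s => ‖f s (x s) - f s (y s)‖ ^ (2:ℕ)) μt :=
      (hΔ2.aestronglyMeasurable.norm.pow 2)
    have hΔsq_int : Integrable (fun s => ‖f s (x s) - f s (y s)‖ ^ (2:ℕ)) μt := by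
      apply Integrable.mono' hρφ_int hΔsq_meas
      filter_upwards [ae_restrict_mem measurableSet_Ioc] with s hs
      rw [Real.norm_eq_abs, abs_of_nonneg (by positivity)]
      exact hfρ s ⟨hs.1.le, hs.2.trans htT⟩ (x s) (y s)
    have hΔint_le : ∫ s in Ioc (0:ℝ) t, ‖f s (x s) - f s (y s)‖ ^ (2:ℕ)
        ≤ ∫ s in Ioc (0:ℝ) t, ρ (φ s) := by
      apply setIntegral_mono_on hΔsq_int hρφ_int measurableSet_Ioc
      intro s hs
      exact hfρ s ⟨hs.1.le, hs.2.trans htT⟩ (x s) (y s)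
    set I : ℝ := ∫ s in Ioc (0:ℝ) t, ρ (φ s) with hIdef
    have hI0 : 0 ≤ I := by
      apply setIntegral_nonneg measurableSet_Ioc
      intro s hs
      exact hρ_nonneg _ (mem_Ici.2 (by positivity))
    have hK0 : 0 ≤ ∫ s in Ioc (0:ℝ) t, k s ^ (2:ℕ) := by
      apply setIntegral_nonneg measurableSet_Ioc
      intro s hs
      positivity
    have hS0 : 0 ≤ ∫ s in Ioc (0:ℝ) t, ‖f s (x s) - f s (y s)‖ ^ (2:ℕ) := by
      apply setIntegral_nonneg measurableSet_Ioc
      intro s hs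
      positivity
    -- put things together
    have hfinal : ‖x t - y t‖ ≤ (1 / Real.Gamma α) * (D ^ (1/2:ℝ) * I ^ (1/2:ℝ)) := by
      rw [hdiff, norm_smul, Real.norm_eq_abs, abs_of_nonneg (by positivity)]
      apply mul_le_mul_of_nonneg_left _ (by positivity)
      refine le_trans hnorm1 (le_trans hCS ?_)
      simp_rw [hrpow2]
      apply mul_le_mul
      · exact Real.rpow_le_rpow hK0 hkint_le (by norm_num)
      · exact Real.rpow_le_rpow hS0 hΔint_le (by norm_num)
      · positivity
      · positivity
    have hsq : ∀ z : ℝ, 0 ≤ z → (z ^ (1/2:ℝ)) ^ (2:ℕ) = z := by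
      intro z hz
      rw [← Real.rpow_natCast (z ^ (1/2:ℝ)) 2, ← Real.rpow_mul hz]
      norm_num
    calc φ t = ‖x t - y t‖ ^ (2:ℕ) := rfl
      _ ≤ ((1 / Real.Gamma α) * (D ^ (1/2:ℝ) * I ^ (1/2:ℝ))) ^ (2:ℕ) :=
          pow_le_pow_left₀ (norm_nonneg _) hfinal 2
      _ = (1 / Real.Gamma α) ^ 2 * ((D ^ (1/2:ℝ)) ^ (2:ℕ) * (I ^ (1/2:ℝ)) ^ (2:ℕ)) := by ring
      _ = C * I := by rw [hsq D hD0.le, hsq I hI0, hCdef]; ring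
      _ = C * ∫ s in (0:ℝ)..t, ρ (φ s) := by
          rw [intervalIntegral.integral_of_le ht0]
  -- apply the Osgood lemma
  have hzero := osgood_aux hT hC ρ hρ_nonneg hρ_cont hρ_mono hρ_pos hOsgood φ
    hφ_cont hφ_nonneg key
  intro t ht
  have h : ‖x t - y t‖ ^ 2 = 0 := hzero t ht
  have hn : ‖x t - y t‖ = 0 := by
    simpa using pow_eq_zero_iff (by norm_num : (2:ℕ) ≠ 0) |>.1 h
  rw [← sub_eq_zero]
  exact norm_eq_zero.1 hn
end
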